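/- For the (3,-2) reduction of the discrete Liouville equation, the map φ(v₀,...,v₄) = (v₁,...,v₄,v₅) with v₅ = v₂v₃/(1+v₀) - 1, the function C = (v₀+1)(v₂+1)(v₄+1)/((v₁+1)v₂(v₃+1)) satisfies C(φ(v)) = 1/C(v); hence I₁ = C + 1/C is an integral of φ. -/
import Mathlib


/-- For the (3,-2) Liouville reduction, C∘φ = 1/C, hence C + 1/C is an integral. -/
theorem liouville_casimir_two_integral (v0 v1 v2 v3 v4 : ℝ)
    (h0 : v0 + 1 ≠ 0) (h1 : v1 + 1 ≠ 0) (h2 : v2 ≠ 0) (h2' : v2 + 1 ≠ 0)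
    (h3 : v3 ≠ 0) (h3' : v3 + 1 ≠ 0) (h4 : v4 + 1 ≠ 0)
    (v5 : ℝ) (hv5 : v5 = v2 * v3 / (1 + v0) - 1) :
    ((v1 + 1) * (v3 + 1) * (v5 + 1) / ((v2 + 1) * v3 * (v4 + 1))
        = 1 / ((v0 + 1) * (v2 + 1) * (v4 + 1) / ((v1 + 1) * v2 * (v3 + 1))))
    ∧ ((v1 + 1) * (v3 + 1) * (v5 + 1) / ((v2 + 1) * v3 * (v4 + 1))
          + 1 / ((v1 + 1) * (v3 + 1) * (v5 + 1) / ((v2 + 1) * v3 * (v4 + 1)))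
        = (v0 + 1) * (v2 + 1) * (v4 + 1) / ((v1 + 1) * v2 * (v3 + 1))
          + 1 / ((v0 + 1) * (v2 + 1) * (v4 + 1) / ((v1 + 1) * v2 * (v3 + 1)))) := by
  have h0' : (1:ℝ) + v0 ≠ 0 := by rwa [add_comm]
  subst hv5
  have hC : (v0 + 1) * (v2 + 1) * (v4 + 1) / ((v1 + 1) * v2 * (v3 + 1)) ≠ 0 := by
    apply div_ne_zero <;> positivity
  have key : (v1 + 1) * (v3 + 1) * (v2 * v3 / (1 + v0) - 1 + 1) / ((v2 + 1) * v3 * (v4 + 1))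
      = 1 / ((v0 + 1) * (v2 + 1) * (v4 + 1) / ((v1 + 1) * v2 * (v3 + 1))) := by
    field_simp
    ring
  refine ⟨key, ?_⟩
  rw [key, one_div_one_div]
  ring
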